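/- Let P be a poset on [n], let (u,v) be an incomparable pair of P with u < v (in the usual order on integers), and suppose γ ∈ Σ_R(P_{(v,u)}) and i ∈ [n-1] with i not a right descent of γ and γs_i ∈ Σ_R(P). Then γs_i ∈ Σ_R(P_{(v,u)}). In other words, the span of Σ_R(P_{(v,u)}) is closed under the 0-Hecke action defining the module M_P. -/

import Mathlib

open Equiv

/-- Coxeter length of a permutation = number of inversions. -/
def len {n : ℕ} (σ : Perm (Fin n)) : ℕ :=
  (Finset.univ.filter fun p : Fin n × Fin n => p.1 < p.2 ∧ σ p.2 < σ p.1).card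

/-- The simple transposition `s_i = (i, i+1)` (0-indexed). -/
def simpleT {n : ℕ} (i : ℕ) (h : i + 1 < n) : Perm (Fin n) :=
  Equiv.swap ⟨i, Nat.lt_of_succ_lt h⟩ ⟨i + 1, h⟩

/-- `Σ_R(P)`: linear extensions of a partial order `P` on `[n]`. -/
def SigmaR {n : ℕ} (P : PartialOrder (Fin n)) : Set (Perm (Fin n)) :=
  {γ | ∀ i j : Fin n, P.lt i j → γ⁻¹ i < γ⁻¹ j}

lemma swap_adj_lt {n : ℕ} {i : ℕ} (h : i + 1 < n) {p q : Fin n}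
    (hpq : p < q) (hne : ¬ (p = ⟨i, Nat.lt_of_succ_lt h⟩ ∧ q = ⟨i + 1, h⟩)) :
    simpleT i h p < simpleT i h q := by
  simp only [simpleT, Equiv.swap_apply_def]
  rcases p with ⟨p, hpn⟩; rcases q with ⟨q, hqn⟩
  rw [Fin.lt_def] at hpq
  simp only [not_and, Fin.mk.injEq] at hne
  split_ifs with h1 h2 h3 h4 h5 h6 <;>
    simp_all only [Fin.mk.injEq, Fin.mk_lt_mk, true_implies] <;> omega

lemma len_descent {n : ℕ} {i : ℕ} (h : i + 1 < n) (γ : Perm (Fin n))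
    (hd : γ ⟨i + 1, h⟩ < γ ⟨i, Nat.lt_of_succ_lt h⟩) :
    len (γ * simpleT i h) < len γ := by
  classical
  set i0 : Fin n := ⟨i, Nat.lt_of_succ_lt h⟩
  set i1 : Fin n := ⟨i + 1, h⟩
  set s := simpleT i h with hs
  set A := Finset.univ.filter fun p : Fin n × Fin n => p.1 < p.2 ∧ (γ * s) p.2 < (γ * s) p.1 with hA
  set B := Finset.univ.filter fun p : Fin n × Fin n => p.1 < p.2 ∧ γ p.2 < γ p.1 with hB
  have hinj : Function.Injective (Prod.map s s : Fin n × Fin n → Fin n × Fin n) :=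
    Function.Injective.prodMap s.injective s.injective
  have hsub : A.image (Prod.map s s) ⊆ B.erase (i0, i1) := by
    intro q hq
    simp only [Finset.mem_image] at hq
    obtain ⟨p, hp, rfl⟩ := hq
    replace hp := (Finset.mem_filter.mp hp).2; simp only [Perm.mul_apply] at hp
    obtain ⟨hlt, hinv⟩ := hp
    have hnep : ¬ (p.1 = i0 ∧ p.2 = i1) := by
      rintro ⟨h1, h2⟩
      rw [h1, h2] at hinv
      have e0 : s i0 = i1 := Equiv.swap_apply_left _ _
      have e1 : s i1 = i0 := Equiv.swap_apply_right _ _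
      rw [e0, e1] at hinv
      exact absurd hd (not_lt.mpr hinv.le)
    have hslt : s p.1 < s p.2 := swap_adj_lt h hlt hnep
    rw [Finset.mem_erase]
    constructor
    · rintro hq
      have h1 : s p.1 = i0 := congrArg Prod.fst hq
      have h2 : s p.2 = i1 := congrArg Prod.snd hq
      have hp1 : p.1 = i1 := s.injective (h1.trans (Equiv.swap_apply_right i0 i1).symm)
      have hp2 : p.2 = i0 := s.injective (h2.trans (Equiv.swap_apply_left i0 i1).symm)
      rw [hp1, hp2] at hlt
      exact absurd hlt (by simp [i0, i1, Fin.lt_def])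
    · simp only [hB, Finset.mem_filter, Finset.mem_univ, true_and, Prod.map]
      exact ⟨hslt, hinv⟩
  have hmemB : (i0, i1) ∈ B := by
    simp only [hB, Finset.mem_filter, Finset.mem_univ, true_and]
    exact ⟨by simp [i0, i1, Fin.lt_def], hd⟩
  calc len (γ * s) = (A.image (Prod.map s s)).card := (Finset.card_image_of_injective _ hinj).symm
    _ ≤ (B.erase (i0, i1)).card := Finset.card_le_card hsub
    _ < B.card := Finset.card_lt_card (Finset.erase_ssubset hmemB)

lemma decompPvu {n : ℕ} (P : PartialOrder (Fin n)) (u v : Fin n) (hnuv : ¬ P.le u v)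
    {a b : Fin n}
    (hab : Relation.ReflTransGen (fun x y => P.le x y ∨ (x = v ∧ y = u)) a b) :
    P.le a b ∨ (P.le a v ∧ P.le u b) := by
  induction hab with
  | refl => exact Or.inl (P.le_refl a)
  | @tail b c _ hstep ih =>
    rcases ih with h1 | ⟨h1, h2⟩
    · rcases hstep with h3 | ⟨h4, h5⟩
      · exact Or.inl (P.le_trans _ _ _ h1 h3)
      · refine Or.inr ⟨?_, ?_⟩
        · rw [← h4]; exact h1
        · rw [h5]
    · rcases hstep with h3 | ⟨h4, h5⟩
      · exact Or.inr ⟨h1, P.le_trans _ _ _ h2 h3⟩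
      · rw [h4] at h2; exact absurd h2 hnuv

/-- Let `(u,v)` be an incomparable pair of `P` with `u < v`, let `P_{(v,u)}` be the
partial order generated by `P` together with `v ≺ u`.  If `γ ∈ Σ_R(P_{(v,u)})`,
`i` is not a right descent of `γ`, and `γ s_i ∈ Σ_R(P)`, then
`γ s_i ∈ Σ_R(P_{(v,u)})`; i.e. the span of `Σ_R(P_{(v,u)})` is closed under the
0-Hecke action defining `M_P`. -/
theorem sigmaR_sub_closed {n : ℕ} (P Pvu : PartialOrder (Fin n)) (u v : Fin n)
    (huv : u < v)
    (hinc : ¬ P.le u v ∧ ¬ P.le v u)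
    (hvu : ∀ a b : Fin n, Pvu.le a b ↔
      Relation.ReflTransGen (fun x y => P.le x y ∨ (x = v ∧ y = u)) a b)
    (γ : Perm (Fin n)) (hγ : γ ∈ SigmaR Pvu)
    (i : ℕ) (h : i + 1 < n)
    (hnd : ¬ (len (γ * simpleT i h) < len γ))
    (hmem : γ * simpleT i h ∈ SigmaR P) :
    γ * simpleT i h ∈ SigmaR Pvu := by
  classical
  set i0 : Fin n := ⟨i, Nat.lt_of_succ_lt h⟩
  set i1 : Fin n := ⟨i + 1, h⟩
  have hi01 : i0 ≠ i1 := by simp [i0, i1, Fin.ext_iff]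
  have hγlt : γ i0 < γ i1 := by
    rcases lt_trichotomy (γ i0) (γ i1) with h1 | h1 | h1
    · exact h1
    · exact absurd (γ.injective h1) hi01
    · exact absurd (len_descent h γ h1) hnd
  have hPvult : Pvu.lt v u := by
    have hle : Pvu.le v u :=
      (hvu v u).mpr (Relation.ReflTransGen.single (Or.inr ⟨rfl, rfl⟩))
    have hvune : v ≠ u := by
      intro e
      rw [Fin.lt_def, e] at huv
      exact Nat.lt_irrefl _ huv
    exact (Pvu.lt_iff_le_not_ge v u).mpr
      ⟨hle, fun hle' => absurd (Pvu.le_antisymm _ _ hle hle') hvune⟩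
  have hγinv : γ⁻¹ v < γ⁻¹ u := hγ v u hPvult
  have hσinv : ∀ x : Fin n, (γ * simpleT i h)⁻¹ x = simpleT i h (γ⁻¹ x) := by
    intro x
    have hinv : (simpleT i h)⁻¹ = simpleT i h := Equiv.swap_inv _ _
    rw [mul_inv_rev, hinv, Perm.mul_apply]
  have hkey : (γ * simpleT i h)⁻¹ v < (γ * simpleT i h)⁻¹ u := by
    rw [hσinv, hσinv]
    refine swap_adj_lt h hγinv ?_
    rintro ⟨h1, h2⟩
    have hv : v = γ i0 := by have := congrArg γ h1; simpa using this
    have hu : u = γ i1 := by have := congrArg γ h2; simpa using this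
    rw [hv, hu] at huv
    rw [Fin.lt_def] at huv hγlt
    exact absurd huv (Nat.lt_asymm hγlt)
  intro a b hab
  have hle : Pvu.le a b := ((Pvu.lt_iff_le_not_ge a b).mp hab).1
  have hne : a ≠ b := by
    rintro rfl
    exact ((Pvu.lt_iff_le_not_ge a a).mp hab).2 (Pvu.le_refl a)
  rcases decompPvu P u v hinc.1 ((hvu a b).mp hle) with h1 | ⟨h1, h2⟩
  · exact hmem a b ((P.lt_iff_le_not_ge a b).mpr
      ⟨h1, fun h2 => hne (P.le_antisymm _ _ h1 h2)⟩)
  · have ha : (γ * simpleT i h)⁻¹ a ≤ (γ * simpleT i h)⁻¹ v := by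
      rcases eq_or_ne a v with rfl | hne'
      · exact Fin.le_refl _
      · exact Fin.le_of_lt (hmem a v ((P.lt_iff_le_not_ge a v).mpr
          ⟨h1, fun h3 => hne' (P.le_antisymm _ _ h1 h3)⟩))
    have hb : (γ * simpleT i h)⁻¹ u ≤ (γ * simpleT i h)⁻¹ b := by
      rcases eq_or_ne u b with rfl | hne'
      · exact Fin.le_refl _
      · exact Fin.le_of_lt (hmem u b ((P.lt_iff_le_not_ge u b).mpr
          ⟨h2, fun h3 => hne' (P.le_antisymm _ _ h2 h3)⟩))
    rw [Fin.le_def] at ha hb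
    rw [Fin.lt_def] at hkey ⊢
    exact Nat.lt_of_le_of_lt ha (Nat.lt_of_lt_of_le hkey hb)
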